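/- Let G be a finite connected network with distinct positive edge-lengths and let T be its (unique) minimum spanning tree. Then for any two vertices v and w, perc(v,w) equals the maximum edge-length along the unique path in T from v to w. -/

import Mathlib

open SimpleGraph Finset

/-- The subgraph of `G` consisting of edges of length `< t`. -/
def Gt {V : Type*} (G : SimpleGraph V) (len : Sym2 V → ℝ) (t : ℝ) : SimpleGraph V where
  Adj v w := G.Adj v w ∧ len s(v, w) < t
  symm := ⟨fun v w h => ⟨h.1.symm, by rw [Sym2.eq_swap]; exact h.2⟩⟩
  loopless := ⟨fun v h => G.loopless.irrefl v h.1⟩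

/-- `perc(v,w)`: the infimum of `t` such that `v` and `w` lie in the same component of `G_t`. -/
noncomputable def perc {V : Type*} (G : SimpleGraph V) (len : Sym2 V → ℝ) (v w : V) : ℝ :=
  sInf {t | (Gt G len t).Reachable v w}

/-- `T` (a finite set of edges) is a spanning tree of `G`. -/
def IsST {V : Type*} (G : SimpleGraph V) (T : Finset (Sym2 V)) : Prop :=
  ↑T ⊆ G.edgeSet ∧ (SimpleGraph.fromEdgeSet (↑T : Set (Sym2 V))).IsTree

/-- Total length of a set of edges. -/
noncomputable def lenSum {V : Type*} (len : Sym2 V → ℝ) (T : Finset (Sym2 V)) : ℝ :=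
  ∑ e ∈ T, len e

/-- `T` is a minimum spanning tree of `G`. -/
def IsMST {V : Type*} (G : SimpleGraph V) (len : Sym2 V → ℝ) (T : Finset (Sym2 V)) : Prop :=
  IsST G T ∧ ∀ T', IsST G T' → lenSum len T ≤ lenSum len T'

/-- `percE e`: `perc(v,w)` for an edge `e = (v,w)`. -/
noncomputable def percE {V : Type*} (G : SimpleGraph V) (len : Sym2 V → ℝ) (e : Sym2 V) : ℝ :=
  sInf {t | ∃ v w, e = s(v, w) ∧ (Gt G len t).Reachable v w}

section Aux

variable {V : Type*}

/-- If every edge of `K` joins `H`-reachable vertices, then `K`-reachability implies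
`H`-reachability. -/
lemma reach_of_forall_adj {K H : SimpleGraph V}
    (h : ∀ x y, K.Adj x y → H.Reachable x y) {v w : V} (q : K.Walk v w) :
    H.Reachable v w := by
  induction q with
  | nil => exact SimpleGraph.Reachable.refl _
  | cons ha _ ih => exact (h _ _ ha).trans ih

/-- After deleting one edge `s(a,b)`, the endpoints of any walk are still connected,
or each can reach `a` or `b`. -/
lemma reach_endpoint {H : SimpleGraph V} (a b : V) {z y : V} (q : H.Walk z y) :
    (H.deleteEdges {s(a, b)}).Reachable z y ∨
      (H.deleteEdges {s(a, b)}).Reachable z a ∨ (H.deleteEdges {s(a, b)}).Reachable z b := by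
  induction q with
  | nil => exact Or.inl (SimpleGraph.Reachable.refl _)
  | @cons u c d ha q ih =>
    by_cases he : s(u, c) = s(a, b)
    · rw [Sym2.eq_iff] at he
      rcases he with ⟨rfl, rfl⟩ | ⟨rfl, rfl⟩
      · exact Or.inr (Or.inl (SimpleGraph.Reachable.refl _))
      · exact Or.inr (Or.inr (SimpleGraph.Reachable.refl _))
    · have hadj : (H.deleteEdges {s(a, b)}).Adj u c := by
        rw [SimpleGraph.deleteEdges_adj]
        exact ⟨ha, by simpa using he⟩
      rcases ih with h | h | h
      · exact Or.inl (hadj.reachable.trans h)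
      · exact Or.inr (Or.inl (hadj.reachable.trans h))
      · exact Or.inr (Or.inr (hadj.reachable.trans h))

/-- If a walk with no repeated edges from `v` to `w` uses the edge `s(a,b)`, and `v` can still
reach `w` after deleting that edge, then `a` can still reach `b` after deleting it. -/
lemma reach_endpoints_of_walk {H : SimpleGraph V} {a b v w : V}
    (p : H.Walk v w) (hnd : p.edges.Nodup) (hmem : s(a, b) ∈ p.edges)
    (hr : (H.deleteEdges {s(a, b)}).Reachable v w) :
    (H.deleteEdges {s(a, b)}).Reachable a b := by
  induction p with
  | nil => simp at hmem
  | @cons u c _ ha q ih =>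
    rw [SimpleGraph.Walk.edges_cons, List.nodup_cons] at hnd
    rw [SimpleGraph.Walk.edges_cons, List.mem_cons] at hmem
    rcases hmem with he | hmem
    · have hq : s(a, b) ∉ q.edges := by rw [he]; exact hnd.1
      have hcw := (q.toDeleteEdges {s(a, b)}
        (fun e hee hes => hq ((Set.mem_singleton_iff.mp hes) ▸ hee))).reachable
      rw [Sym2.eq_iff] at he
      rcases he with ⟨rfl, rfl⟩ | ⟨rfl, rfl⟩
      · exact hr.trans hcw.symm
      · exact (hr.trans hcw.symm).symm
    · have hadj : (H.deleteEdges {s(a, b)}).Adj u c := by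
        rw [SimpleGraph.deleteEdges_adj]
        refine ⟨ha, ?_⟩
        simp only [Set.mem_singleton_iff]
        intro hcontra
        exact hnd.1 (hcontra ▸ hmem)
      exact ih hnd.2 hmem (hadj.symm.reachable.trans hr)

end Aux

/-- For the unique MST `T` of a finite connected network with distinct positive edge-lengths,
`perc(v,w)` is the maximum edge-length along the unique path in `T` from `v` to `w`. -/
theorem perc_eq_max_on_MST_path {V : Type*} [Fintype V] [Nonempty V]
    (G : SimpleGraph V) (hG : G.Connected) (len : Sym2 V → ℝ)
    (hpos : ∀ e ∈ G.edgeSet, 0 < len e) (hdist : Set.InjOn len G.edgeSet)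
    (T : Finset (Sym2 V)) (hT : IsMST G len T) (v w : V) (hvw : v ≠ w)
    (p : (SimpleGraph.fromEdgeSet (↑T : Set (Sym2 V))).Walk v w) (hp : p.IsPath) :
    IsGreatest {x : ℝ | ∃ e ∈ p.edges, len e = x} (perc G len v w) := by
  classical
  have hTG : (↑T : Set (Sym2 V)) ⊆ G.edgeSet := hT.1.1
  have htree : (SimpleGraph.fromEdgeSet (↑T : Set (Sym2 V))).IsTree := hT.1.2
  -- the maximum edge of `p`
  have hne : p.edges.toFinset.Nonempty := by
    rw [List.toFinset_nonempty_iff]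
    intro h
    exact hvw (SimpleGraph.Walk.eq_of_length_eq_zero
      (by rw [← SimpleGraph.Walk.length_edges, h, List.length_nil]))
  obtain ⟨emax, hemaxF, hmax⟩ := Finset.exists_max_image p.edges.toFinset len hne
  have hemaxE : emax ∈ p.edges := List.mem_toFinset.mp hemaxF
  have hmax' : ∀ e ∈ p.edges, len e ≤ len emax := fun e he =>
    hmax e (List.mem_toFinset.mpr he)
  have hedgesT : ∀ e ∈ p.edges, e ∈ T := by
    intro e he
    have := p.edges_subset_edgeSet he
    rw [SimpleGraph.edgeSet_fromEdgeSet] at this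
    exact this.1
  have hemaxT : emax ∈ T := hedgesT emax hemaxE
  obtain ⟨a, b, hab⟩ : ∃ a b, emax = s(a, b) := Sym2.exists.mp ⟨emax, rfl⟩
  set S : Set ℝ := {t | (Gt G len t).Reachable v w} with hS
  -- upper: every `t > len emax` works
  have hub : ∀ t : ℝ, len emax < t → t ∈ S := by
    intro t ht
    have hmem : ∀ e ∈ p.edges, e ∈ (Gt G len t).edgeSet := by
      intro e he
      revert he
      induction e using Sym2.ind with
      | _ x y =>
        intro he
        rw [SimpleGraph.mem_edgeSet]
        have heT : s(x, y) ∈ T := hedgesT _ he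
        have hGxy : G.Adj x y := (SimpleGraph.mem_edgeSet G).mp (hTG heT)
        exact ⟨hGxy, lt_of_le_of_lt (hmax' _ he) ht⟩
    exact ⟨p.transfer _ hmem⟩
  -- lower: every `t ∈ S` satisfies `len emax ≤ t`
  have hlb : ∀ t ∈ S, len emax ≤ t := by
    intro t ht
    by_contra hcon
    push_neg at hcon
    -- the deleted-edge graph
    set H' := (SimpleGraph.fromEdgeSet (↑T : Set (Sym2 V))).deleteEdges {s(a, b)} with hH'
    have hbridge : ¬H'.Reachable a b := by
      have hmem : emax ∈ (SimpleGraph.fromEdgeSet (↑T : Set (Sym2 V))).edgeSet := by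
        rw [SimpleGraph.edgeSet_fromEdgeSet]
        exact ⟨hemaxT, G.not_isDiag_of_mem_edgeSet (hTG hemaxT)⟩
      have hbr := (SimpleGraph.isAcyclic_iff_forall_edge_isBridge.mp htree.IsAcyclic) hmem
      rw [hab, SimpleGraph.isBridge_iff] at hbr
      exact hbr
    have claim1 : ¬H'.Reachable v w := fun hr =>
      hbridge (reach_endpoints_of_walk p hp.edges_nodup (hab ▸ hemaxE) hr)
    -- find a crossing edge of the `Gt` walk
    obtain ⟨x, y, hxy, hnr⟩ : ∃ x y, (Gt G len t).Adj x y ∧ ¬H'.Reachable x y := by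
      by_contra hc
      push_neg at hc
      exact claim1 (ht.elim fun q => reach_of_forall_adj hc q)
    have hGxy : G.Adj x y := hxy.1
    have hxylt : len s(x, y) < t := hxy.2
    have hflt : len s(x, y) < len emax := hxylt.trans hcon
    -- the crossing edge is not in T
    have hfT : s(x, y) ∉ T := by
      intro hf
      apply hnr
      have : H'.Adj x y := by
        rw [hH', SimpleGraph.deleteEdges_adj, SimpleGraph.fromEdgeSet_adj]
        refine ⟨⟨hf, G.ne_of_adj hGxy⟩, ?_⟩
        simp only [Set.mem_singleton_iff, ← hab]
        intro h
        exact absurd hflt (by rw [h]; exact lt_irrefl _)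
      exact this.reachable
    -- the exchanged edge set
    set T' : Finset (Sym2 V) := insert s(x, y) (T.erase emax) with hT'
    have hfnotErase : s(x, y) ∉ T.erase emax := fun h => hfT (Finset.mem_of_mem_erase h)
    have hT'G : (↑T' : Set (Sym2 V)) ⊆ G.edgeSet := by
      intro e he
      rw [hT', Finset.coe_insert, Set.mem_insert_iff] at he
      rcases he with rfl | he
      · exact (SimpleGraph.mem_edgeSet G).mpr hGxy
      · exact hTG (Finset.mem_of_mem_erase (by exact_mod_cast he))
    set H'' := SimpleGraph.fromEdgeSet (↑T' : Set (Sym2 V)) with hH''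
    have hle'' : H' ≤ H'' := by
      intro z z' h
      rw [hH', SimpleGraph.deleteEdges_adj, SimpleGraph.fromEdgeSet_adj] at h
      rw [hH'', SimpleGraph.fromEdgeSet_adj]
      refine ⟨?_, h.1.2⟩
      rw [hT', Finset.coe_insert, Set.mem_insert_iff]
      right
      exact_mod_cast Finset.mem_erase.mpr
        ⟨by rw [hab]; simpa using h.2, h.1.1⟩
    have hxyH'' : H''.Adj x y := by
      rw [hH'', SimpleGraph.fromEdgeSet_adj]
      exact ⟨by rw [hT', Finset.coe_insert]; exact Set.mem_insert _ _, G.ne_of_adj hGxy⟩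
    have hsides : ∀ z : V, H'.Reachable z a ∨ H'.Reachable z b := by
      intro z
      rcases reach_endpoint a b (htree.isConnected.preconnected z a).some with h | h | h
      · exact Or.inl h
      · exact Or.inl h
      · exact Or.inr h
    have hab'' : H''.Reachable a b := by
      rcases hsides x with h1 | h1 <;> rcases hsides y with h2 | h2
      · exact absurd (h1.trans h2.symm) hnr
      · exact (h1.symm.mono hle'').trans (hxyH''.reachable.trans (h2.mono hle''))
      · exact (h2.symm.mono hle'').trans (hxyH''.symm.reachable.trans (h1.mono hle''))
      · exact absurd (h1.trans h2.symm) hnr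
    have hza : ∀ z : V, H''.Reachable z a := by
      intro z
      rcases hsides z with h | h
      · exact h.mono hle''
      · exact (h.mono hle'').trans hab''.symm
    have hconn'' : H''.Connected := by
      rw [SimpleGraph.connected_iff]
      exact ⟨fun z z' => (hza z).trans (hza z').symm, inferInstance⟩
    have hacyc'' : H''.IsAcyclic := by
      intro u c hc
      by_cases hfc : s(x, y) ∈ c.edges
      · have hkey := (SimpleGraph.adj_and_reachable_delete_edges_iff_exists_cycle
          (G := H'')).mpr ⟨u, c, hc, hfc⟩
        apply hnr
        refine hkey.2.mono ?_
        intro z z' h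
        rw [SimpleGraph.deleteEdges_adj, hH'', SimpleGraph.fromEdgeSet_adj] at h
        have hzne : z ≠ z' := h.1.2
        have hzf : s(z, z') ≠ s(x, y) := fun hcon => h.2 (by simp [hcon])
        rw [hH', SimpleGraph.deleteEdges_adj, SimpleGraph.fromEdgeSet_adj]
        have hz : s(z, z') ∈ T.erase emax := by
          have := h.1.1
          rw [hT', Finset.coe_insert, Set.mem_insert_iff] at this
          rcases this with hzz | hzz
          · exact absurd (by simpa using hzz) hzf
          · exact_mod_cast hzz
        refine ⟨⟨Finset.mem_of_mem_erase hz, h.1.2⟩, ?_⟩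
        simp only [Set.mem_singleton_iff, ← hab]
        exact (Finset.mem_erase.mp hz).1
      · have hce : ∀ e ∈ c.edges, e ∈ (SimpleGraph.fromEdgeSet (↑T : Set (Sym2 V))).edgeSet := by
          intro e he
          have := c.edges_subset_edgeSet he
          rw [hH'', SimpleGraph.edgeSet_fromEdgeSet] at this
          rw [SimpleGraph.edgeSet_fromEdgeSet]
          refine ⟨?_, this.2⟩
          have := this.1
          rw [hT', Finset.coe_insert, Set.mem_insert_iff] at this
          rcases this with rfl | hzz
          · exact absurd he hfc
          · exact_mod_cast Finset.mem_of_mem_erase (by exact_mod_cast hzz)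
        exact htree.IsAcyclic (c.transfer (SimpleGraph.fromEdgeSet (↑T : Set (Sym2 V))) hce) (hc.transfer hce)
    have hMST' := hT.2 T' ⟨hT'G, ⟨hconn'', hacyc''⟩⟩
    have hsum : lenSum len T' = len s(x, y) + (lenSum len T - len emax) := by
      rw [hT', lenSum, Finset.sum_insert hfnotErase, lenSum,
        Finset.sum_erase_eq_sub hemaxT]
    rw [hsum] at hMST'
    linarith
  -- compute the infimum
  have hSne : S.Nonempty := ⟨len emax + 1, hub _ (lt_add_one _)⟩
  have hbdd : BddBelow S := ⟨len emax, hlb⟩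
  have hInf : sInf S = len emax := by
    apply le_antisymm
    · have h1 : Set.Ioi (len emax) ⊆ S := fun t ht => hub t ht
      calc sInf S ≤ sInf (Set.Ioi (len emax)) :=
            csInf_le_csInf hbdd Set.nonempty_Ioi h1
        _ = len emax := csInf_Ioi
    · exact le_csInf hSne hlb
  have hperc : perc G len v w = len emax := hInf
  constructor
  · exact ⟨emax, hemaxE, hperc.symm⟩
  · rintro r ⟨e, he, rfl⟩
    rw [hperc]
    exact hmax' e he
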